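/- For r, s > 0 with r + s < 1, the condition 2(1-r-s)(r+s-√s·√(r+s)) > r implies √(r(1-r-s)) > r + s + √s·√(r+s). -/
import Mathlib

theorem cond_implies_gt (r s : ℝ) (hr : 0 < r) (hs : 0 < s) (hrs : r + s < 1)
    (h : 2 * (1 - r - s) * (r + s - Real.sqrt s * Real.sqrt (r + s)) > r) :
    Real.sqrt (r * (1 - r - s)) > r + s + Real.sqrt s * Real.sqrt (r + s) := by
  set a := Real.sqrt s * Real.sqrt (r + s) with ha
  have hts : (0:ℝ) < r + s := by linarith
  have hA2 : a * a = s * (r + s) := by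
    rw [ha, mul_mul_mul_comm, Real.mul_self_sqrt hs.le, Real.mul_self_sqrt hts.le]
  have hApos : 0 < a := mul_pos (Real.sqrt_pos.2 hs) (Real.sqrt_pos.2 hts)
  -- t + a < 2t(1-t)
  have key : r + s + a < 2 * (r + s) * (1 - r - s) := by
    nlinarith [mul_pos hts hApos, mul_lt_mul_of_pos_right h (by linarith : (0:ℝ) < r + s + a)]
  have hr2 : 2 * (r + s) * (r + s + a) ≤ r := by
    nlinarith [mul_pos hts hApos, sq_nonneg (a - (r+s)*(1-2*(r+s)))]
  have hsq : (r + s + a) ^ 2 < r * (1 - r - s) := by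
    nlinarith [mul_pos hts hApos]
  have h1 : (0:ℝ) ≤ r + s + a := by positivity
  exact (Real.lt_sqrt h1).mpr hsq
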